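/- Let B₁ ⊆ A^{1+m} and B₂ ⊆ A^{1+n} be mutually algebraic sets sharing their first coordinate. Then the 'join' C = {(x, u, v) ∈ A^{1+m+n} : (x,u) ∈ B₁ and (x,v) ∈ B₂} is mutually algebraic. -/

import Mathlib

open Set

/-- `B ⊆ A^n` is mutually algebraic with bound `K`: for every proper partition of the
coordinates `{1,...,n}` into disjoint nonempty sets `X` and `Y` (here `Y` with `Yᶜ = X`
nonempty, i.e. `Y ≠ univ`), every fiber of the projection onto the `Y`-coordinates
restricted to `B` has at most `K` elements. -/
def MutuallyAlgebraicWith {A : Type*} {n : ℕ} (B : Set (Fin n → A)) (K : ℕ) : Prop :=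
  ∀ Y : Set (Fin n), Y.Nonempty → Y ≠ Set.univ → ∀ v : Fin n → A,
    ({b ∈ B | ∀ i ∈ Y, b i = v i}).Finite ∧ ({b ∈ B | ∀ i ∈ Y, b i = v i}).ncard ≤ K

/-- `B ⊆ A^n` is mutually algebraic if it is mutually algebraic with some bound `K`. -/
def MutuallyAlgebraic {A : Type*} {n : ℕ} (B : Set (Fin n → A)) : Prop :=
  ∃ K : ℕ, MutuallyAlgebraicWith B K

section Aux

variable {α β : Type*}

private lemma count_inj {F : Set α} {S : Set β} {f : α → β} {K : ℕ}
    (hinj : Set.InjOn f F) (hm : Set.MapsTo f F S) (hfin : S.Finite) (hK : S.ncard ≤ K) :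
    F.Finite ∧ F.ncard ≤ K := by
  have himg : f '' F ⊆ S := hm.image_subset
  refine ⟨Set.Finite.of_finite_image (hfin.subset himg) hinj, ?_⟩
  calc F.ncard = (f '' F).ncard := (Set.ncard_image_of_injOn hinj).symm
    _ ≤ S.ncard := Set.ncard_le_ncard himg hfin
    _ ≤ K := hK

private lemma biUnion_bound {s : Set α} (hs : s.Finite) {t : α → Set β} {L : ℕ}
    (ht : ∀ a ∈ s, (t a).Finite ∧ (t a).ncard ≤ L) :
    (⋃ a ∈ s, t a).Finite ∧ (⋃ a ∈ s, t a).ncard ≤ s.ncard * L := by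
  revert ht
  refine Set.Finite.induction_on (motive := fun s _ => (∀ a ∈ s, (t a).Finite ∧ (t a).ncard ≤ L) →
      (⋃ a ∈ s, t a).Finite ∧ (⋃ a ∈ s, t a).ncard ≤ s.ncard * L) s hs (by simp) ?_
  intro a s has hs ih ht
  have h1 := ht a (mem_insert a s)
  have h2 := ih (fun b hb => ht b (mem_insert_of_mem a hb))
  rw [biUnion_insert]
  refine ⟨h1.1.union h2.1, ?_⟩
  calc (t a ∪ ⋃ b ∈ s, t b).ncard ≤ (t a).ncard + (⋃ b ∈ s, t b).ncard :=
        Set.ncard_union_le _ _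
    _ ≤ L + s.ncard * L := add_le_add h1.2 h2.2
    _ = (s.ncard + 1) * L := by ring
    _ = (insert a s).ncard * L := by rw [Set.ncard_insert_of_notMem has hs]

private lemma split_bound {F : Set α} {S : Set β} {g : α → β} {L : ℕ}
    (hm : Set.MapsTo g F S) (hS : S.Finite)
    (hfib : ∀ b ∈ S, ({c ∈ F | g c = b}).Finite ∧ ({c ∈ F | g c = b}).ncard ≤ L) :
    F.Finite ∧ F.ncard ≤ S.ncard * L := by
  have hF : F = ⋃ b ∈ S, {c ∈ F | g c = b} := by
    apply subset_antisymm
    · intro c hc; exact mem_biUnion (hm hc) ⟨hc, rfl⟩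
    · intro c hc; simp only [mem_iUnion, mem_setOf_eq] at hc; exact hc.choose_spec.choose_spec.1
  rw [hF]; exact biUnion_bound hS hfib

end Aux

section Proj

variable {A : Type*} {m n : ℕ}

/-- Projection onto the `B₁`-coordinates. -/
private def proj₁ (c : Fin (1 + m + n) → A) : Fin (1 + m) → A := fun j => c (Fin.castAdd n j)

/-- Projection onto the `B₂`-coordinates (first coordinate together with the last `n`). -/
private def proj₂ (c : Fin (1 + m + n) → A) : Fin (1 + n) → A :=
  Fin.append (fun _ => c (Fin.castAdd n (Fin.castAdd m (0 : Fin 1))))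
    (fun j => c (Fin.natAdd (1 + m) j))

private lemma proj₁_append (x : Fin 1 → A) (u : Fin m → A) (v : Fin n → A) :
    proj₁ (Fin.append (Fin.append x u) v) = Fin.append x u := by
  funext j
  simp [proj₁, Fin.append_left]

private lemma proj₂_append (x : Fin 1 → A) (u : Fin m → A) (v : Fin n → A) :
    proj₂ (Fin.append (Fin.append x u) v) = Fin.append x v := by
  unfold proj₂
  have hh : (fun _ : Fin 1 => Fin.append (Fin.append x u) v
      (Fin.castAdd n (Fin.castAdd m (0 : Fin 1)))) = x := by
    funext j
    have hj : j = (0 : Fin 1) := Subsingleton.elim _ _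
    rw [hj, Fin.append_left, Fin.append_left]
  have ht : (fun j : Fin n => Fin.append (Fin.append x u) v (Fin.natAdd (1 + m) j)) = v := by
    funext j
    rw [Fin.append_right]
  rw [hh, ht]

private lemma proj_glue_inj (x₁ x₂ : Fin 1 → A) (u₁ u₂ : Fin m → A) (v₁ v₂ : Fin n → A)
    (h1 : Fin.append x₁ u₁ = Fin.append x₂ u₂)
    (h2 : Fin.append x₁ v₁ = Fin.append x₂ v₂) :
    Fin.append (Fin.append x₁ u₁) v₁ = Fin.append (Fin.append x₂ u₂) v₂ := by
  have hv : v₁ = v₂ := by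
    funext j
    have := congrFun h2 (Fin.natAdd 1 j)
    rwa [Fin.append_right, Fin.append_right] at this
  rw [h1, hv]

private lemma fiber_zero {k : ℕ} {B : Set (Fin (1 + k) → A)} {K : ℕ}
    (h : MutuallyAlgebraicWith B K) (a₀ : A) :
    {a ∈ B | a (Fin.castAdd k (0 : Fin 1)) = a₀}.Finite ∧
      {a ∈ B | a (Fin.castAdd k (0 : Fin 1)) = a₀}.ncard ≤ K + 1 := by
  rcases Nat.eq_zero_or_pos k with rfl | hk
  · have hsub : {a ∈ B | a (Fin.castAdd 0 (0 : Fin 1)) = a₀} ⊆ {fun _ => a₀} := by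
      intro a ha
      simp only [mem_singleton_iff]
      funext i
      have hi : i = Fin.castAdd 0 (0 : Fin 1) := by
        apply Fin.ext
        have := i.isLt
        simp at this ⊢
      rw [hi]
      exact ha.2
    refine ⟨(finite_singleton _).subset hsub, ?_⟩
    calc {a ∈ B | a (Fin.castAdd 0 (0 : Fin 1)) = a₀}.ncard ≤ ({fun _ => a₀} :
          Set (Fin (1 + 0) → A)).ncard := ncard_le_ncard hsub (finite_singleton _)
      _ = 1 := ncard_singleton _
      _ ≤ K + 1 := le_add_self
  · have hne : ({Fin.castAdd k (0 : Fin 1)} : Set (Fin (1 + k))) ≠ univ := by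
      intro heq
      have hmem : (Fin.natAdd 1 (⟨0, hk⟩ : Fin k)) ∈
          ({Fin.castAdd k (0 : Fin 1)} : Set (Fin (1 + k))) := heq ▸ mem_univ _
      have := congrArg Fin.val (mem_singleton_iff.mp hmem)
      simp [Fin.natAdd, Fin.castAdd] at this
    have h0 := h {Fin.castAdd k (0 : Fin 1)} ⟨_, rfl⟩ hne (fun _ => a₀)
    simp only [mem_singleton_iff, forall_eq] at h0
    exact ⟨h0.1, h0.2.trans (Nat.le_succ K)⟩

private lemma eq_cast_or_nat {p q : ℕ} (i : Fin (p + q)) :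
    (∃ j : Fin p, i = Fin.castAdd q j) ∨ ∃ j : Fin q, i = Fin.natAdd p j := by
  rcases lt_or_ge (i : ℕ) p with h | h
  · exact Or.inl ⟨⟨i, h⟩, Fin.ext rfl⟩
  · refine Or.inr ⟨⟨(i : ℕ) - p, by have := i.isLt; omega⟩, Fin.ext ?_⟩
    show (i : ℕ) = p + ((i : ℕ) - p)
    omega

variable {B₁ : Set (Fin (1 + m) → A)} {B₂ : Set (Fin (1 + n) → A)}

private lemma inner_fiber {K₂ : ℕ} (h₂ : MutuallyAlgebraicWith B₂ K₂)
    (F : Set (Fin (1 + m + n) → A))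
    (hF : ∀ c ∈ F, ∃ (x : Fin 1 → A) (u : Fin m → A) (v : Fin n → A),
      c = Fin.append (Fin.append x u) v ∧ Fin.append x u ∈ B₁ ∧ Fin.append x v ∈ B₂)
    (a : Fin (1 + m) → A) :
    ({c ∈ F | proj₁ c = a}).Finite ∧ ({c ∈ F | proj₁ c = a}).ncard ≤ K₂ + 1 := by
  refine count_inj (f := proj₂)
    (S := {b ∈ B₂ | b (Fin.castAdd n (0 : Fin 1)) = a (Fin.castAdd m (0 : Fin 1))})
    ?_ ?_ (fiber_zero h₂ _).1 (fiber_zero h₂ _).2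
  · intro c₁ hc₁ c₂ hc₂ heq
    obtain ⟨x₁, u₁, v₁, rfl, hB₁₁, hB₂₁⟩ := hF c₁ hc₁.1
    obtain ⟨x₂, u₂, v₂, rfl, hB₁₂, hB₂₂⟩ := hF c₂ hc₂.1
    rw [proj₂_append, proj₂_append] at heq
    have h1 : Fin.append x₁ u₁ = Fin.append x₂ u₂ := by
      have e₁ := hc₁.2; have e₂ := hc₂.2
      rw [proj₁_append] at e₁ e₂
      rw [e₁, e₂]
    exact proj_glue_inj _ _ _ _ _ _ h1 heq
  · intro c hc
    obtain ⟨x, u, v, rfl, hB₁, hB₂⟩ := hF c hc.1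
    have e := hc.2
    rw [proj₁_append] at e
    refine ⟨by rw [proj₂_append]; exact hB₂, ?_⟩
    rw [proj₂_append, Fin.append_left, ← e, Fin.append_left]

private lemma inner_fiber' {K₁ : ℕ} (h₁ : MutuallyAlgebraicWith B₁ K₁)
    (F : Set (Fin (1 + m + n) → A))
    (hF : ∀ c ∈ F, ∃ (x : Fin 1 → A) (u : Fin m → A) (v : Fin n → A),
      c = Fin.append (Fin.append x u) v ∧ Fin.append x u ∈ B₁ ∧ Fin.append x v ∈ B₂)
    (b : Fin (1 + n) → A) :
    ({c ∈ F | proj₂ c = b}).Finite ∧ ({c ∈ F | proj₂ c = b}).ncard ≤ K₁ + 1 := by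
  refine count_inj (f := proj₁)
    (S := {a ∈ B₁ | a (Fin.castAdd m (0 : Fin 1)) = b (Fin.castAdd n (0 : Fin 1))})
    ?_ ?_ (fiber_zero h₁ _).1 (fiber_zero h₁ _).2
  · intro c₁ hc₁ c₂ hc₂ heq
    obtain ⟨x₁, u₁, v₁, rfl, hB₁₁, hB₂₁⟩ := hF c₁ hc₁.1
    obtain ⟨x₂, u₂, v₂, rfl, hB₁₂, hB₂₂⟩ := hF c₂ hc₂.1
    rw [proj₁_append, proj₁_append] at heq
    have h2 : Fin.append x₁ v₁ = Fin.append x₂ v₂ := by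
      have e₁ := hc₁.2; have e₂ := hc₂.2
      rw [proj₂_append] at e₁ e₂
      rw [e₁, e₂]
    exact proj_glue_inj _ _ _ _ _ _ heq h2
  · intro c hc
    obtain ⟨x, u, v, rfl, hB₁, hB₂⟩ := hF c hc.1
    have e := hc.2
    rw [proj₂_append] at e
    refine ⟨by rw [proj₁_append]; exact hB₁, ?_⟩
    rw [proj₁_append, Fin.append_left, ← e, Fin.append_left]

end Proj

/-- If `B₁ ⊆ A^(1+m)` and `B₂ ⊆ A^(1+n)` are mutually algebraic sets sharing their first
coordinate, then the join `C = {(x,u,v) : (x,u) ∈ B₁ ∧ (x,v) ∈ B₂}` is mutually algebraic. -/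
theorem stmt9 {A : Type*} {m n : ℕ}
    {B₁ : Set (Fin (1 + m) → A)} {B₂ : Set (Fin (1 + n) → A)}
    (h₁ : MutuallyAlgebraic B₁) (h₂ : MutuallyAlgebraic B₂) :
    MutuallyAlgebraic {c : Fin (1 + m + n) → A |
      ∃ (x : Fin 1 → A) (u : Fin m → A) (v : Fin n → A),
        c = Fin.append (Fin.append x u) v ∧
        Fin.append x u ∈ B₁ ∧ Fin.append x v ∈ B₂} := by
  obtain ⟨K₁, h₁⟩ := h₁
  obtain ⟨K₂, h₂⟩ := h₂
  refine ⟨(K₁ + 1) * (K₂ + 1), ?_⟩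
  intro Y hYne hYuniv w
  set CC : Set (Fin (1 + m + n) → A) := {c : Fin (1 + m + n) → A |
      ∃ (x : Fin 1 → A) (u : Fin m → A) (v : Fin n → A),
        c = Fin.append (Fin.append x u) v ∧
        Fin.append x u ∈ B₁ ∧ Fin.append x v ∈ B₂} with hCC
  set F : Set (Fin (1 + m + n) → A) := {c ∈ CC | ∀ i ∈ Y, c i = w i} with hFdef
  have hF : ∀ c ∈ F, ∃ (x : Fin 1 → A) (u : Fin m → A) (v : Fin n → A),
      c = Fin.append (Fin.append x u) v ∧ Fin.append x u ∈ B₁ ∧ Fin.append x v ∈ B₂ :=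
    fun c hc => hc.1
  by_cases hempty : ∀ j : Fin (1 + m), Fin.castAdd n j ∉ Y
  · -- no B₁-coordinate is constrained; use the B₂ fiber
    set Y₂ : Set (Fin (1 + n)) :=
      {j | ∃ j' : Fin n, j = Fin.natAdd 1 j' ∧ Fin.natAdd (1 + m) j' ∈ Y} with hY₂
    have hY₂ne : Y₂.Nonempty := by
      obtain ⟨i, hi⟩ := hYne
      rcases eq_cast_or_nat (p := 1 + m) (q := n) i with ⟨j, rfl⟩ | ⟨j, rfl⟩
      · exact absurd hi (hempty j)
      · exact ⟨Fin.natAdd 1 j, j, rfl, hi⟩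
    have hY₂uni : Y₂ ≠ univ := by
      intro heq
      have : (Fin.castAdd n (0 : Fin 1)) ∈ Y₂ := heq ▸ mem_univ _
      obtain ⟨j', hj', _⟩ := this
      have := congrArg Fin.val hj'
      simp [Fin.natAdd, Fin.castAdd] at this
      omega
    set w₂ : Fin (1 + n) → A := Fin.append (fun _ => w (Fin.castAdd n (Fin.castAdd m (0 : Fin 1))))
      (fun j => w (Fin.natAdd (1 + m) j)) with hw₂
    have hS := h₂ Y₂ hY₂ne hY₂uni w₂
    have hmain := split_bound (g := proj₂) (F := F)
      (S := {b ∈ B₂ | ∀ i ∈ Y₂, b i = w₂ i})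
      (by
        intro c hc
        obtain ⟨x, u, v, hcdec, hB₁, hB₂⟩ := hF c hc
        refine ⟨by rw [hcdec, proj₂_append]; exact hB₂, ?_⟩
        intro i hi
        obtain ⟨j', rfl, hj'⟩ := hi
        show proj₂ c (Fin.natAdd 1 j') = w₂ (Fin.natAdd 1 j')
        unfold proj₂
        rw [Fin.append_right, hw₂, Fin.append_right]
        exact hc.2 _ hj')
      hS.1
      (fun b _ => inner_fiber' h₁ F hF b)
    refine ⟨hmain.1, hmain.2.trans ?_⟩
    calc ({b ∈ B₂ | ∀ i ∈ Y₂, b i = w₂ i}).ncard * (K₁ + 1) ≤ K₂ * (K₁ + 1) :=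
          Nat.mul_le_mul_right _ hS.2
      _ ≤ (K₁ + 1) * (K₂ + 1) := by nlinarith
  · push_neg at hempty
    obtain ⟨j₀, hj₀⟩ := hempty
    by_cases hfull : ∀ j : Fin (1 + m), Fin.castAdd n j ∈ Y
    · -- all B₁-coordinates constrained: proj₁ is constant on the fiber
      have hmain := split_bound (g := proj₁) (F := F)
        (S := ({fun j => w (Fin.castAdd n j)} : Set (Fin (1 + m) → A)))
        (by
          intro c hc
          simp only [mem_singleton_iff]
          funext j
          exact hc.2 _ (hfull j))
        (finite_singleton _)
        (fun a _ => inner_fiber h₂ F hF a)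
      refine ⟨hmain.1, hmain.2.trans ?_⟩
      rw [ncard_singleton, one_mul]
      nlinarith
    · push_neg at hfull
      obtain ⟨j₁, hj₁⟩ := hfull
      set Y₁ : Set (Fin (1 + m)) := {j | Fin.castAdd n j ∈ Y} with hY₁
      have hY₁ne : Y₁.Nonempty := ⟨j₀, hj₀⟩
      have hY₁uni : Y₁ ≠ univ := by
        intro heq
        exact hj₁ (heq ▸ mem_univ j₁ : j₁ ∈ Y₁)
      have hS := h₁ Y₁ hY₁ne hY₁uni (fun j => w (Fin.castAdd n j))
      have hmain := split_bound (g := proj₁) (F := F)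
        (S := {a ∈ B₁ | ∀ i ∈ Y₁, a i = w (Fin.castAdd n i)})
        (by
          intro c hc
          obtain ⟨x, u, v, hcdec, hB₁, hB₂⟩ := hF c hc
          refine ⟨by rw [hcdec, proj₁_append]; exact hB₁, ?_⟩
          intro i hi
          exact hc.2 _ hi)
        hS.1
        (fun a _ => inner_fiber h₂ F hF a)
      refine ⟨hmain.1, hmain.2.trans ?_⟩
      calc ({a ∈ B₁ | ∀ i ∈ Y₁, a i = w (Fin.castAdd n i)}).ncard * (K₂ + 1)
            ≤ K₁ * (K₂ + 1) := Nat.mul_le_mul_right _ hS.2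
        _ ≤ (K₁ + 1) * (K₂ + 1) := by nlinarith
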